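/- Let p > c > 0, α > 0, μ, σ > 0, κ = (p−c)/p. Define L(q) = (α/2)(pq/α + μ² + σ² − √((pq/α + μ² + σ²)² − 4μ²·pq/α)) − cq for q ≥ 0. Then the unique stationary point of L obtained from the first-order condition L'(q) = 0 in the regime κ ≥ σ²/(μ²+σ²) is q* = (μ² − σ² + 2μσ·f(1−κ))·α/p, where f(x) = (1−2x)/(2√(x(1−x))). -/

import Mathlib

noncomputable def scarfF (x : ℝ) : ℝ := (1 - 2 * x) / (2 * Real.sqrt (x * (1 - x)))

lemma deriv_L (p c α μ σ : ℝ) (hα : α ≠ 0) (hμ : 0 < μ) (hσ : 0 < σ) (q : ℝ) :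
    deriv (fun q => (α / 2) * (p * q / α + μ ^ 2 + σ ^ 2
        - Real.sqrt ((p * q / α + μ ^ 2 + σ ^ 2) ^ 2 - 4 * μ ^ 2 * (p * q / α))) - c * q) q
    = (p / 2) * (1 - (p * q / α - μ ^ 2 + σ ^ 2)
        / Real.sqrt ((p * q / α - μ ^ 2 + σ ^ 2) ^ 2 + 4 * μ ^ 2 * σ ^ 2)) - c := by
  have key : ∀ x : ℝ, (p * x / α + μ ^ 2 + σ ^ 2) ^ 2 - 4 * μ ^ 2 * (p * x / α)
      = (p * x / α - μ ^ 2 + σ ^ 2) ^ 2 + 4 * μ ^ 2 * σ ^ 2 := by intro x; ring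
  have hupos : 0 < (p * q / α - μ ^ 2 + σ ^ 2) ^ 2 + 4 * μ ^ 2 * σ ^ 2 := by positivity
  have hSpos : 0 < Real.sqrt ((p * q / α - μ ^ 2 + σ ^ 2) ^ 2 + 4 * μ ^ 2 * σ ^ 2) :=
    Real.sqrt_pos.mpr hupos
  have h1 : HasDerivAt (fun x : ℝ => p * x / α + μ ^ 2 + σ ^ 2) (p / α) q := by
    have : HasDerivAt (fun x : ℝ => p * x) p q := by
      simpa using (hasDerivAt_id q).const_mul p
    simpa using ((this.div_const α).add_const (μ ^ 2)).add_const (σ ^ 2)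
  have h2 : HasDerivAt (fun x : ℝ => (p * x / α + μ ^ 2 + σ ^ 2) ^ 2 - 4 * μ ^ 2 * (p * x / α))
      (2 * (p * q / α + μ ^ 2 + σ ^ 2) * (p / α) - 4 * μ ^ 2 * (p / α)) q := by
    have ha : HasDerivAt (fun x : ℝ => (p * x / α + μ ^ 2 + σ ^ 2) ^ 2)
        (2 * (p * q / α + μ ^ 2 + σ ^ 2) * (p / α)) q := by
      have := h1.fun_pow 2
      simpa [mul_comm, mul_assoc] using this
    have hb : HasDerivAt (fun x : ℝ => p * x / α) (p / α) q := by
      have : HasDerivAt (fun x : ℝ => p * x) p q := by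
        simpa using (hasDerivAt_id q).const_mul p
      simpa using this.div_const α
    simpa using ha.fun_sub (hb.const_mul (4 * μ ^ 2))
  have hne : (p * q / α + μ ^ 2 + σ ^ 2) ^ 2 - 4 * μ ^ 2 * (p * q / α) ≠ 0 := by
    rw [key q]; exact ne_of_gt hupos
  have h3 : HasDerivAt (fun x : ℝ => Real.sqrt ((p * x / α + μ ^ 2 + σ ^ 2) ^ 2 - 4 * μ ^ 2 * (p * x / α)))
      ((1 / (2 * Real.sqrt ((p * q / α + μ ^ 2 + σ ^ 2) ^ 2 - 4 * μ ^ 2 * (p * q / α)))) *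
        (2 * (p * q / α + μ ^ 2 + σ ^ 2) * (p / α) - 4 * μ ^ 2 * (p / α))) q :=
    (Real.hasDerivAt_sqrt hne).comp q h2
  have h4 : HasDerivAt (fun q : ℝ => (α / 2) * (p * q / α + μ ^ 2 + σ ^ 2
      - Real.sqrt ((p * q / α + μ ^ 2 + σ ^ 2) ^ 2 - 4 * μ ^ 2 * (p * q / α))) - c * q)
      ((α / 2) * (p / α - (1 / (2 * Real.sqrt ((p * q / α + μ ^ 2 + σ ^ 2) ^ 2 - 4 * μ ^ 2 * (p * q / α)))) *
        (2 * (p * q / α + μ ^ 2 + σ ^ 2) * (p / α) - 4 * μ ^ 2 * (p / α))) - c) q := by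
    have hc' : HasDerivAt (fun x : ℝ => c * x) c q := by
      simpa using (hasDerivAt_id q).const_mul c
    exact ((h1.sub h3).const_mul (α / 2)).sub hc'
  rw [h4.deriv, key q]
  have hS := hSpos.ne'
  field_simp
  ring

theorem stmt_7 (p c α μ σ κ : ℝ) (hc : 0 < c) (hcp : c < p) (hα : 0 < α)
    (hμ : 0 < μ) (hσ : 0 < σ) (hκ : κ = (p - c) / p)
    (hnd : σ ^ 2 / (μ ^ 2 + σ ^ 2) ≤ κ) :
    let L : ℝ → ℝ := fun q => (α / 2) * (p * q / α + μ ^ 2 + σ ^ 2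
        - Real.sqrt ((p * q / α + μ ^ 2 + σ ^ 2) ^ 2 - 4 * μ ^ 2 * (p * q / α))) - c * q
    let qstar : ℝ := (μ ^ 2 - σ ^ 2 + 2 * μ * σ * scarfF (1 - κ)) * α / p
    deriv L qstar = 0 ∧ ∀ q : ℝ, 0 < q → deriv L q = 0 → q = qstar := by
  intro L qstar
  have hp : 0 < p := hc.trans hcp
  have hκ0 : 0 < κ := by rw [hκ]; exact div_pos (by linarith) hp
  have hκ1 : κ < 1 := by rw [hκ]; rw [div_lt_one hp]; linarith
  have hr2 : 0 < κ * (1 - κ) := by nlinarith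
  set r := Real.sqrt (κ * (1 - κ)) with hrdef
  have hr : 0 < r := Real.sqrt_pos.mpr hr2
  have hrsq : r ^ 2 = κ * (1 - κ) := Real.sq_sqrt hr2.le
  have hf : scarfF (1 - κ) = (2 * κ - 1) / (2 * r) := by
    unfold scarfF
    rw [show (1 - κ) * (1 - (1 - κ)) = κ * (1 - κ) by ring]
    rw [show (1 - 2 * (1 - κ)) = 2 * κ - 1 by ring]
  set B : ℝ := 2 * μ * σ * scarfF (1 - κ) with hBdef
  have hB : B = μ * σ * (2 * κ - 1) / r := by
    rw [hBdef, hf]; field_simp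
  have hqs : p * qstar / α = μ ^ 2 - σ ^ 2 + B := by
    show p * ((μ ^ 2 - σ ^ 2 + B) * α / p) / α = _
    field_simp
  have hA : p * qstar / α - μ ^ 2 + σ ^ 2 = B := by rw [hqs]; ring
  have hBS : B ^ 2 + 4 * μ ^ 2 * σ ^ 2 = (μ * σ / r) ^ 2 := by
    rw [hB, div_pow, div_pow]
    rw [div_add' _ _ _ (pow_ne_zero 2 hr.ne'), div_eq_div_iff (pow_ne_zero 2 hr.ne')
      (pow_ne_zero 2 hr.ne'), hrsq]
    ring
  have hSB : Real.sqrt (B ^ 2 + 4 * μ ^ 2 * σ ^ 2) = μ * σ / r := by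
    rw [hBS, Real.sqrt_sq (by positivity)]
  have h2κ : 2 * κ - 1 = (p - 2 * c) / p := by rw [hκ]; field_simp; ring
  constructor
  · rw [show deriv L qstar = (p / 2) * (1 - (p * qstar / α - μ ^ 2 + σ ^ 2)
        / Real.sqrt ((p * qstar / α - μ ^ 2 + σ ^ 2) ^ 2 + 4 * μ ^ 2 * σ ^ 2)) - c from
      deriv_L p c α μ σ hα.ne' hμ hσ qstar]
    rw [hA, hSB, hB]
    have hratio : μ * σ * (2 * κ - 1) / r / (μ * σ / r) = 2 * κ - 1 := by
      field_simp
    rw [hratio, h2κ]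
    field_simp
    ring
  · intro q hq hderiv
    rw [deriv_L p c α μ σ hα.ne' hμ hσ q] at hderiv
    set A : ℝ := p * q / α - μ ^ 2 + σ ^ 2 with hAdef
    set S : ℝ := Real.sqrt (A ^ 2 + 4 * μ ^ 2 * σ ^ 2) with hSdef
    have hSpos : 0 < S := Real.sqrt_pos.mpr (by positivity)
    have hSsq : S ^ 2 = A ^ 2 + 4 * μ ^ 2 * σ ^ 2 := Real.sq_sqrt (by positivity)
    have h6 : p * (S - A) = 2 * c * S := by
      have h := hderiv
      field_simp [hSpos.ne'] at h
      linarith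
    have hAt : A = (2 * κ - 1) * S := by
      rw [h2κ, div_mul_eq_mul_div, eq_div_iff hp.ne']
      linarith [h6]
    have hA2 : A ^ 2 = (2 * κ - 1) ^ 2 * S ^ 2 := by rw [hAt]; ring
    have hk : S ^ 2 * (1 - (2 * κ - 1) ^ 2) = 4 * μ ^ 2 * σ ^ 2 := by
      have h7 : S ^ 2 - A ^ 2 = 4 * μ ^ 2 * σ ^ 2 := by linarith [hSsq]
      calc S ^ 2 * (1 - (2 * κ - 1) ^ 2) = S ^ 2 - (2 * κ - 1) ^ 2 * S ^ 2 := by ring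
        _ = S ^ 2 - A ^ 2 := by rw [hA2]
        _ = 4 * μ ^ 2 * σ ^ 2 := h7
    have hS2 : A ^ 2 + 4 * μ ^ 2 * σ ^ 2 = (μ * σ / r) ^ 2 := by
      rw [← hSsq, div_pow, eq_div_iff (pow_ne_zero 2 hr.ne'), hrsq]
      linear_combination hk / 4
    have hSval : S = μ * σ / r := by
      rw [hSdef, hS2, Real.sqrt_sq (by positivity)]
    have hAB : A = B := by rw [hAt, hSval, hB]; ring
    have hq' : p * q / α - μ ^ 2 + σ ^ 2 = B := hAB
    show q = (μ ^ 2 - σ ^ 2 + B) * α / p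
    rw [eq_div_iff hp.ne']
    have hq2 : p * q = (B + μ ^ 2 - σ ^ 2) * α := by
      field_simp at hq'
      linarith
    linarith [hq2]
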